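/- The fundamental-groupoid realization functor $k_!$ on simplicial sets, the left Kan extension along $\Delta^n \mapsto B\pi(\Delta^n)$, preserves monomorphisms of simplicial sets. -/

import Mathlib

open CategoryTheory CategoryTheory.Limits Simplicial Opposite

/-- The chaotic (indiscrete) category on a type: exactly one morphism between
any two objects. -/
def Chaotic (α : Type) : Type := α

instance {α : Type} : Category (Chaotic α) where
  Hom _ _ := Unit
  id _ := ⟨⟩
  comp _ _ := ⟨⟩

/-- Any function induces a functor between chaotic categories. -/
def chaoticMap {α β : Type} (f : α → β) : Chaotic α ⥤ Chaotic β where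
  obj := f
  map _ := ⟨⟩

instance {α : Type} (a b : Chaotic α) : Subsingleton (a ⟶ b) :=
  inferInstanceAs (Subsingleton Unit)

lemma chaoticFunctor_ext {α : Type} {C : Type} [Category C] (F G : C ⥤ Chaotic α)
    (h : ∀ X, F.obj X = G.obj X) : F = G :=
  CategoryTheory.Functor.ext h (fun _ _ _ => Subsingleton.elim _ _)

/-- The chaotic categories, as a cosimplicial category. -/
def chaoticCosimplicial : SimplexCategory ⥤ Cat where
  obj n := Cat.of (Chaotic (Fin (n.len + 1)))
  map f := (chaoticMap f.toOrderHom).toCatHom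
  map_id n := Cat.ext (chaoticFunctor_ext _ _ (fun _ => rfl))
  map_comp f g := Cat.ext (chaoticFunctor_ext _ _ (fun _ => rfl))

/-- The cosimplicial simplicial set `[n] ↦ B π (Δⁿ)`, the nerve of the chaotic
groupoid on `n + 1` objects (the nerve of the fundamental groupoid of `Δⁿ`). -/
def Bpi : SimplexCategory ⥤ SSet := chaoticCosimplicial ⋙ nerveFunctor

lemma chaoticCA_ext {k m : ℕ} (F G : ComposableArrows (Chaotic (Fin (k + 1))) m)
    (h : ∀ i, F.obj i = G.obj i) : F = G :=
  CategoryTheory.Functor.ext h (fun _ _ _ => Subsingleton.elim _ _)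

/-- The simplex of `B π (Δⁿ)` corresponding to a simplex of `Δⁿ`. -/
def simplexToChaotic {n : SimplexCategory} {m : SimplexCategoryᵒᵖ}
    (x : (SSet.stdSimplex.obj n).obj m) : (Bpi.obj n).obj m where
  obj i := (SSet.stdSimplex.objEquiv x).toOrderHom i
  map _ := ⟨⟩
  map_id _ := rfl
  map_comp _ _ := rfl

lemma Bpi_obj_map_obj {n : SimplexCategory} {m m' : SimplexCategoryᵒᵖ} (g : m ⟶ m')
    (x : (Bpi.obj n).obj m) (i : Fin (m'.unop.len + 1)) :
    ((Bpi.obj n).map g x).obj i = x.obj (g.unop.toOrderHom i) := rfl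

lemma Bpi_map_app_obj {a b : SimplexCategory} (f : a ⟶ b) {m : SimplexCategoryᵒᵖ}
    (x : (Bpi.obj a).obj m) (i : Fin (m.unop.len + 1)) :
    (((Bpi.map f).app m) x).obj i = f.toOrderHom (x.obj i) := rfl

/-- The natural inclusion `Δⁿ → B π (Δⁿ)`. -/
def stdToBpi : SSet.stdSimplex ⟶ Bpi where
  app n :=
    { app := fun _ => TypeCat.ofHom fun x => simplexToChaotic x
      naturality := fun m m' g => by
        apply ConcreteCategory.hom_ext; intro x
        apply chaoticCA_ext
        intro i
        rfl }
  naturality a b f := by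
    apply NatTrans.ext; funext m; apply ConcreteCategory.hom_ext; intro x
    apply chaoticCA_ext
    intro i
    rfl

/-- The fundamental `n`-simplex of `B π (Δⁿ)` (the string of arrows `0 → 1 → ⋯ → n`). -/
def spineEl (n : SimplexCategory) : (Bpi.obj n).obj (op n) where
  obj i := i
  map _ := ⟨⟩
  map_id _ := rfl
  map_comp _ _ := rfl

lemma spineEl_natural {a b : SimplexCategory} (f : a ⟶ b) :
    ((Bpi.map f).app (op a)) (spineEl a) = (Bpi.obj b).map f.op (spineEl b) := by
  apply chaoticCA_ext
  intro i
  rfl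

/-- The functor `k^!`, with `k^!(X)_n = Hom(Bπ(Δⁿ), X)`. -/
def kSh (X : SSet) : SSet where
  obj n := Bpi.obj n.unop ⟶ X
  map f := TypeCat.ofHom fun g => Bpi.map f.unop ≫ g
  map_id n := by apply ConcreteCategory.hom_ext; intro g; simp
  map_comp f g := by apply ConcreteCategory.hom_ext; intro h; simp

/-- `k^!` as a functor. -/
def kShF : SSet ⥤ SSet where
  obj := kSh
  map q := { app := fun _ => TypeCat.ofHom fun g => g ≫ q
             naturality := fun _ _ f => by apply ConcreteCategory.hom_ext; intro g; exact Category.assoc (Bpi.map f.unop) g q }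

/-- The canonical map `k^!(X) ⟶ X` induced by the inclusions `Δⁿ ⊆ Bπ(Δⁿ)`. -/
def kCan (X : SSet) : kSh X ⟶ X where
  app n := TypeCat.ofHom fun g => g.app n (spineEl n.unop)
  naturality n n' f := by
    apply ConcreteCategory.hom_ext; intro g
    exact (congr_arg (fun y => g.app n' y) (spineEl_natural f.unop)).trans
      (ConcreteCategory.congr_hom (g.naturality f) (spineEl n.unop))

/-- An edge of a simplicial set is invertible if its classifying map extends along
`Δ¹ ⊆ Bπ(Δ¹)` (for a quasi-category this says precisely that the edge is invertible
in the homotopy category). -/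
def invEdge (X : SSet) (e : X.obj (op (SimplexCategory.mk 1))) : Prop :=
  ∃ g : Bpi.obj (SimplexCategory.mk 1) ⟶ X,
    g.app (op (SimplexCategory.mk 1)) (spineEl (SimplexCategory.mk 1)) = e

/-- The subcomplex `J(X) ⊆ X` of simplices all of whose edges are invertible;
for a quasi-category `X` this is the maximal Kan subcomplex. -/
def Jmax (X : SSet) : SSet where
  obj m := { x : X.obj m // ∀ f : SimplexCategory.mk 1 ⟶ m.unop, invEdge X (X.map f.op x) }
  map {m m'} g := TypeCat.ofHom fun x => ⟨X.map g x.1, fun f => by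
    have h : X.map f.op (X.map g x.1) = X.map ((f ≫ g.unop).op) x.1 := by
      rw [op_comp, Quiver.Hom.op_unop, FunctorToTypes.map_comp_apply]
    rw [h]
    exact x.2 (f ≫ g.unop)⟩
  map_id m := by apply ConcreteCategory.hom_ext; intro x; apply Subtype.ext; simp
  map_comp f g := by apply ConcreteCategory.hom_ext; intro x; apply Subtype.ext; simp

/-- The inclusion `J(X) ⊆ X`. -/
def Jincl (X : SSet) : Jmax X ⟶ X where
  app _ := TypeCat.ofHom fun x => x.1
  naturality _ _ _ := rfl

/-- Functoriality of `J`. -/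
def Jmap {X Y : SSet} (q : X ⟶ Y) : Jmax X ⟶ Jmax Y where
  app m := TypeCat.ofHom fun x => ⟨q.app m x.1, fun f => by
    obtain ⟨g, hg⟩ := x.2 f
    exact ⟨g ≫ q, by
      show q.app _ (g.app _ _) = _
      rw [hg]
      exact ConcreteCategory.congr_hom (q.naturality f.op) x.1⟩⟩
  naturality m m' g := by
    apply ConcreteCategory.hom_ext; intro x
    apply Subtype.ext
    exact ConcreteCategory.congr_hom (q.naturality g) x.1

/-- The canonical map `k^!(X) ⟶ J(X)`. -/
def kCanJ (X : SSet) : kSh X ⟶ Jmax X where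
  app n := TypeCat.ofHom fun g => ⟨g.app n (spineEl n.unop), fun f => by
    refine ⟨Bpi.map f ≫ g, ?_⟩
    exact (congr_arg (fun y => g.app _ y) (spineEl_natural f)).trans
      (ConcreteCategory.congr_hom (g.naturality f.op) (spineEl n.unop))⟩
  naturality n n' f := by
    apply ConcreteCategory.hom_ext; intro g
    apply Subtype.ext
    exact (congr_arg (fun y => g.app n' y) (spineEl_natural f.unop)).trans
      (ConcreteCategory.congr_hom (g.naturality f) (spineEl n.unop))

/-- Kan fibrations: right lifting property against all horn inclusions. -/
def IsKanFib {X Y : SSet} (q : X ⟶ Y) : Prop :=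
  ∀ ⦃n : ℕ⦄ ⦃i : Fin (n + 1)⦄, HasLiftingProperty (SSet.horn n i).ι q

/-- Trivial Kan fibrations: right lifting property against all boundary inclusions. -/
def IsTrivFib {X Y : SSet} (q : X ⟶ Y) : Prop :=
  ∀ ⦃n : ℕ⦄, HasLiftingProperty (SSet.boundary n).ι q

noncomputable section

instance {m : SimplexCategoryᵒᵖ} : Subsingleton (Δ[0].obj m) := by
  constructor
  intro a b
  apply SSet.stdSimplex.objEquiv.injective
  ext i
  exact congr_arg Fin.val (Subsingleton.elim (α := Fin 1) _ _)

/-- The unique map to the terminal simplicial set `Δ[0]`. -/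
def toPt (X : SSet) : X ⟶ Δ[0] where
  app m := TypeCat.ofHom fun _ => SSet.stdSimplex.objMk (OrderHom.const _ 0)
  naturality _ _ _ := by apply ConcreteCategory.hom_ext; intro x; apply Subsingleton.elim

lemma toPt_unique {X : SSet} (f g : X ⟶ Δ[0]) : f = g :=
  NatTrans.ext (funext fun m => ConcreteCategory.hom_ext _ _ fun x => Subsingleton.elim _ _)

/-- An interval object: a simplicial set with two chosen endpoints. -/
structure SInterval where
  I : SSet
  e0 : Δ[0] ⟶ I
  e1 : Δ[0] ⟶ I

/-- Homotopy of maps `X ⟶ Z` with respect to the cylinder `X × I`. -/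
def SHtpy (c : SInterval) {X Z : SSet} (u v : X ⟶ Z) : Prop :=
  ∃ H : Limits.prod X c.I ⟶ Z,
    Limits.prod.lift (𝟙 X) (toPt X ≫ c.e0) ≫ H = u ∧
    Limits.prod.lift (𝟙 X) (toPt X ≫ c.e1) ≫ H = v

/-- Homotopy classes of maps `X ⟶ Z`. -/
def hoClasses (c : SInterval) (X Z : SSet) : Type :=
  Quot (SHtpy c (X := X) (Z := Z))

lemma lift_map_endpoint {X Y I : SSet} (f : X ⟶ Y) (e : Δ[0] ⟶ I) :
    Limits.prod.lift (𝟙 X) (toPt X ≫ e) ≫ Limits.prod.map f (𝟙 I) =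
      f ≫ Limits.prod.lift (𝟙 Y) (toPt Y ≫ e) := by
  have h : toPt X = f ≫ toPt Y := toPt_unique _ _
  rw [Limits.prod.lift_map, Limits.prod.comp_lift, h]
  simp

/-- Precomposition on homotopy classes. -/
def hoPrecomp (c : SInterval) {X Y : SSet} (f : X ⟶ Y) (Z : SSet) :
    hoClasses c Y Z → hoClasses c X Z :=
  Quot.map (fun u => f ≫ u) (fun u v h => by
    obtain ⟨H, h0, h1⟩ := h
    exact ⟨Limits.prod.map f (𝟙 c.I) ≫ H,
      by rw [← Category.assoc, lift_map_endpoint, Category.assoc, h0],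
      by rw [← Category.assoc, lift_map_endpoint, Category.assoc, h1]⟩)

/-- The Kan–Quillen interval `Δ¹`. -/
def kanSInterval : SInterval :=
  ⟨Δ[1], SSet.stdSimplex.map (SimplexCategory.δ 1),
    SSet.stdSimplex.map (SimplexCategory.δ 0)⟩

/-- The Joyal interval `E¹ = Bπ(Δ¹)`, the nerve of the free-standing isomorphism. -/
def joyalSInterval : SInterval :=
  ⟨Bpi.obj (SimplexCategory.mk 1),
    stdToBpi.app (SimplexCategory.mk 0) ≫ Bpi.map (SimplexCategory.δ 1),
    stdToBpi.app (SimplexCategory.mk 0) ≫ Bpi.map (SimplexCategory.δ 0)⟩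

/-- Weak homotopy equivalences (equivalences in the Kan–Quillen model structure),
characterized by homotopy classes of maps into Kan complexes. -/
def IsWeakEquiv {X Y : SSet} (f : X ⟶ Y) : Prop :=
  ∀ Z : SSet, SSet.KanComplex Z → Function.Bijective (hoPrecomp kanSInterval f Z)

/-- Weak categorical (Joyal) equivalences, characterized by `E¹`-homotopy classes of
maps into quasi-categories. -/
def IsJoyalEquiv {X Y : SSet} (f : X ⟶ Y) : Prop :=
  ∀ Z : SSet, SSet.Quasicategory Z → Function.Bijective (hoPrecomp joyalSInterval f Z)

/-- Fibrations in the Joyal model structure: right lifting property against all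
trivial cofibrations (monomorphisms which are Joyal equivalences). -/
def IsJoyalFib {X Y : SSet} (q : X ⟶ Y) : Prop :=
  ∀ ⦃A B : SSet⦄ (i : A ⟶ B), Mono i → IsJoyalEquiv i → HasLiftingProperty i q

end

namespace KB

open CategoryTheory CategoryTheory.Limits Simplicial Opposite Function

/-- Any set-theoretic section of a surjective monotone map between `Fin`s is monotone;
we build one hitting a prescribed point. -/
lemma exists_section {p q : SimplexCategory} (σ : p ⟶ q)
    (hσ : Function.Surjective σ.toOrderHom) (a : Fin (p.len + 1)) :
    ∃ δ : q ⟶ p, δ ≫ σ = 𝟙 q ∧ δ.toOrderHom (σ.toOrderHom a) = a := by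
  classical
  let d : Fin (q.len + 1) → Fin (p.len + 1) :=
    fun j => if σ.toOrderHom a = j then a else (hσ j).choose
  have hsec : ∀ j, σ.toOrderHom (d j) = j := by
    intro j
    by_cases h : σ.toOrderHom a = j
    · simp [d, h]
    · simp only [d, if_neg h]
      exact (hσ j).choose_spec
  have hmono : Monotone d := by
    intro j j' hjj'
    rcases eq_or_lt_of_le hjj' with h | h
    · subst h; exact le_refl _
    · by_contra hc
      push_neg at hc
      have := σ.toOrderHom.monotone hc.le
      rw [hsec, hsec] at this
      exact absurd (lt_of_lt_of_le h this) (lt_irrefl _)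
  refine ⟨SimplexCategory.Hom.mk ⟨d, hmono⟩, ?_, ?_⟩
  · apply SimplexCategory.Hom.ext
    apply OrderHom.ext
    funext j
    exact hsec j
  · simp [d]

/-- A simplex is degenerate if it is the image of a simplex of strictly smaller
dimension under a surjective structure map. -/
def Degen (X : SSet) {p : SimplexCategory} (x : X.obj (op p)) : Prop :=
  ∃ (q : SimplexCategory) (α : p ⟶ q) (y : X.obj (op q)),
    Function.Surjective α.toOrderHom ∧ q.len < p.len ∧ x = X.map α.op y

lemma comp_toOrderHom_apply {p q r : SimplexCategory} (α : p ⟶ q) (β : q ⟶ r)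
    (i : Fin (p.len + 1)) :
    (α ≫ β).toOrderHom i = β.toOrderHom (α.toOrderHom i) := rfl

lemma coe_comp_toOrderHom {p q r : SimplexCategory} (α : p ⟶ q) (β : q ⟶ r) :
    ⇑(α ≫ β).toOrderHom = ⇑β.toOrderHom ∘ ⇑α.toOrderHom := rfl

/-- Eilenberg–Zilber, existence part. -/
lemma ez_exists (X : SSet) (p : SimplexCategory) (x : X.obj (op p)) :
    ∃ t : Σ q : SimplexCategory, (p ⟶ q) × X.obj (op q),
      Function.Surjective t.2.1.toOrderHom ∧ ¬ Degen X t.2.2 ∧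
        x = X.map t.2.1.op t.2.2 := by
  suffices h : ∀ (n : ℕ) (p : SimplexCategory), p.len ≤ n → ∀ x : X.obj (op p),
      ∃ t : Σ q : SimplexCategory, (p ⟶ q) × X.obj (op q),
        Function.Surjective t.2.1.toOrderHom ∧ ¬ Degen X t.2.2 ∧
          x = X.map t.2.1.op t.2.2 from h p.len p le_rfl x
  intro n
  induction n with
  | zero =>
    intro p hp x
    refine ⟨⟨p, 𝟙 p, x⟩, Function.surjective_id, ?_, by simp⟩
    rintro ⟨q, α, y, hs, hlt, -⟩
    have hlt' : q.len < p.len := hlt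
    omega
  | succ n IH =>
    intro p hp x
    by_cases hx : Degen X x
    · obtain ⟨q, α, y, hs, hlt, rfl⟩ := hx
      obtain ⟨⟨r, τ, z⟩, h1, h2, h3⟩ := IH q (by omega) y
      refine ⟨⟨r, α ≫ τ, z⟩, ?_, h2, ?_⟩
      · rw [coe_comp_toOrderHom]
        exact h1.comp hs
      · rw [h3, ← FunctorToTypes.map_comp_apply, ← op_comp]
    · exact ⟨⟨p, 𝟙 p, x⟩, Function.surjective_id, hx, by simp⟩

/-- If a nondegenerate simplex is pulled back from another simplex along `θ`,
then `θ` is injective. -/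
lemma injective_of_nondegen {X : SSet} {q₁ q₂ : SimplexCategory} (θ : q₁ ⟶ q₂)
    {z₁ : X.obj (op q₁)} {z₂ : X.obj (op q₂)} (h : z₁ = X.map θ.op z₂)
    (hnd : ¬ Degen X z₁) : Function.Injective θ.toOrderHom := by
  rcases lt_or_ge (image θ).len q₁.len with hlt | hle
  · exfalso
    apply hnd
    refine ⟨image θ, factorThruImage θ, X.map (image.ι θ).op z₂, ?_, hlt, ?_⟩
    · rw [← SimplexCategory.epi_iff_surjective]
      infer_instance
    · rw [h, ← FunctorToTypes.map_comp_apply, ← op_comp, image.fac]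
  · have hle' : (image θ).len ≤ q₁.len := SimplexCategory.len_le_of_epi
      (factorThruImage θ)
    have hcard : q₁.len = (image θ).len := le_antisymm hle (by omega)
    have hes : Function.Surjective (factorThruImage θ).toOrderHom := by
      rw [← SimplexCategory.epi_iff_surjective]; infer_instance
    have hbij : Function.Bijective (factorThruImage θ).toOrderHom :=
      (Fintype.bijective_iff_surjective_and_card _).mpr ⟨hes, by simp [hcard]⟩
    have hιinj : Function.Injective (image.ι θ).toOrderHom := by
      rw [← SimplexCategory.mono_iff_injective]; infer_instance
    have : ⇑θ.toOrderHom =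
        ⇑(image.ι θ).toOrderHom ∘ ⇑(factorThruImage θ).toOrderHom := by
      rw [← coe_comp_toOrderHom, image.fac]
    rw [this]
    exact hιinj.comp hbij.injective

end KB
namespace KB

open CategoryTheory CategoryTheory.Limits Simplicial Opposite Function

lemma len_le_of_ez {X : SSet} {p q₁ q₂ : SimplexCategory} (σ₁ : p ⟶ q₁) (σ₂ : p ⟶ q₂)
    (h₁ : Surjective σ₁.toOrderHom)
    {z₁ : X.obj (op q₁)} {z₂ : X.obj (op q₂)} (hnd₁ : ¬ Degen X z₁)
    (h : X.map σ₁.op z₁ = X.map σ₂.op z₂) : q₁.len ≤ q₂.len := by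
  obtain ⟨δ, hδ, -⟩ := exists_section σ₁ h₁ 0
  have hz : z₁ = X.map (δ ≫ σ₂).op z₂ := by
    calc z₁ = X.map (δ ≫ σ₁).op z₁ := by rw [hδ]; simp
    _ = X.map δ.op (X.map σ₁.op z₁) := by rw [op_comp, FunctorToTypes.map_comp_apply]
    _ = X.map δ.op (X.map σ₂.op z₂) := by rw [h]
    _ = X.map (δ ≫ σ₂).op z₂ := by rw [op_comp, FunctorToTypes.map_comp_apply]
  have hinj := injective_of_nondegen (δ ≫ σ₂) hz hnd₁
  have := Fintype.card_le_of_injective _ hinj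
  simpa using this

lemma ez_unique {X : SSet} {p q₁ q₂ : SimplexCategory} (σ₁ : p ⟶ q₁) (σ₂ : p ⟶ q₂)
    (h₁ : Surjective σ₁.toOrderHom) (h₂ : Surjective σ₂.toOrderHom)
    {z₁ : X.obj (op q₁)} {z₂ : X.obj (op q₂)}
    (hnd₁ : ¬ Degen X z₁) (hnd₂ : ¬ Degen X z₂)
    (h : X.map σ₁.op z₁ = X.map σ₂.op z₂) :
    (⟨q₁, σ₁, z₁⟩ : Σ q : SimplexCategory, (p ⟶ q) × X.obj (op q)) = ⟨q₂, σ₂, z₂⟩ := by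
  obtain rfl : q₁ = q₂ := SimplexCategory.ext
    (le_antisymm (len_le_of_ez σ₁ σ₂ h₁ hnd₁ h) (len_le_of_ez σ₂ σ₁ h₂ hnd₂ h.symm))
  have main : ∀ a : Fin (p.len + 1),
      σ₂.toOrderHom a = σ₁.toOrderHom a ∧ z₁ = z₂ := by
    intro a
    obtain ⟨δ, hδ, hδa⟩ := exists_section σ₁ h₁ a
    have hz : z₁ = X.map (δ ≫ σ₂).op z₂ := by
      calc z₁ = X.map (δ ≫ σ₁).op z₁ := by rw [hδ]; simp
      _ = X.map δ.op (X.map σ₁.op z₁) := by rw [op_comp, FunctorToTypes.map_comp_apply]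
      _ = X.map δ.op (X.map σ₂.op z₂) := by rw [h]
      _ = X.map (δ ≫ σ₂).op z₂ := by rw [op_comp, FunctorToTypes.map_comp_apply]
    have hinj := injective_of_nondegen (δ ≫ σ₂) hz hnd₁
    haveI : Mono (δ ≫ σ₂) := SimplexCategory.mono_iff_injective.mpr hinj
    have hid : δ ≫ σ₂ = 𝟙 _ := SimplexCategory.eq_id_of_mono _
    constructor
    · have h1 := congrArg (fun φ : q₁ ⟶ q₁ =>
        SimplexCategory.Hom.toOrderHom φ (σ₁.toOrderHom a)) hid
      have h2 : σ₂.toOrderHom (δ.toOrderHom (σ₁.toOrderHom a)) = σ₁.toOrderHom a := h1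
      rw [hδa] at h2
      exact h2
    · rw [hz, hid]; simp
  have hσ : σ₁ = σ₂ := by
    apply SimplexCategory.Hom.ext
    apply OrderHom.ext
    funext a
    exact ((main a).1).symm
  rw [hσ, (main 0).2]

lemma img_fact {m p : SimplexCategory} (u : Fin (m.len + 1) → Fin (p.len + 1)) :
    ∃ t : Σ k : SimplexCategory, (k ⟶ p) × (Fin (m.len + 1) → Fin (k.len + 1)),
      Function.Injective t.2.1.toOrderHom ∧ Function.Surjective t.2.2 ∧
        ⇑t.2.1.toOrderHom ∘ t.2.2 = u := by
  classical
  set s : Finset (Fin (p.len + 1)) := Finset.image u Finset.univ with hs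
  have hpos : 0 < s.card :=
    Finset.card_pos.mpr ⟨u 0, Finset.mem_image_of_mem u (Finset.mem_univ 0)⟩
  have hcard' : s.card = (SimplexCategory.mk (s.card - 1)).len + 1 := by
    simp only [SimplexCategory.len_mk]
    omega
  set eiso := s.orderIsoOfFin hcard' with heiso
  refine ⟨⟨SimplexCategory.mk (s.card - 1),
    SimplexCategory.Hom.mk ⟨fun i => (eiso i : Fin (p.len + 1)), ?_⟩,
    fun a => eiso.symm ⟨u a, Finset.mem_image_of_mem u (Finset.mem_univ a)⟩⟩, ?_, ?_, ?_⟩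
  · intro i j hij
    exact Subtype.coe_le_coe.mpr (eiso.monotone hij)
  · intro i j hij
    exact eiso.injective (Subtype.ext hij)
  · intro i
    obtain ⟨a, -, ha⟩ := Finset.mem_image.mp (eiso i).2
    refine ⟨a, ?_⟩
    have : (⟨u a, Finset.mem_image_of_mem u (Finset.mem_univ a)⟩ :
      {x // x ∈ s}) = eiso i := Subtype.ext ha
    have h2 := congrArg eiso.symm this
    rw [OrderIso.symm_apply_apply] at h2
    exact h2
  · funext a
    show ((eiso (eiso.symm ⟨u a, _⟩)) : Fin (p.len + 1)) = u a
    rw [OrderIso.apply_symm_apply]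

lemma img_fact_unique {m p : SimplexCategory}
    {t₁ t₂ : Σ k : SimplexCategory, (k ⟶ p) × (Fin (m.len + 1) → Fin (k.len + 1))}
    (hi₁ : Function.Injective t₁.2.1.toOrderHom) (hs₁ : Function.Surjective t₁.2.2)
    (hi₂ : Function.Injective t₂.2.1.toOrderHom) (hs₂ : Function.Surjective t₂.2.2)
    (h : ⇑t₁.2.1.toOrderHom ∘ t₁.2.2 = ⇑t₂.2.1.toOrderHom ∘ t₂.2.2) : t₁ = t₂ := by
  classical
  obtain ⟨k₁, ι₁, g₁⟩ := t₁
  obtain ⟨k₂, ι₂, g₂⟩ := t₂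
  dsimp at hi₁ hs₁ hi₂ hs₂ h
  have hr : Set.range ⇑ι₁.toOrderHom = Set.range ⇑ι₂.toOrderHom := by
    rw [← hs₁.range_comp, ← hs₂.range_comp, h]
  obtain rfl : k₁ = k₂ := by
    apply SimplexCategory.ext
    have c₁ : (Finset.image (⇑ι₁.toOrderHom) Finset.univ).card = k₁.len + 1 := by
      rw [Finset.card_image_of_injective _ hi₁, Finset.card_univ, Fintype.card_fin]
    have c₂ : (Finset.image (⇑ι₂.toOrderHom) Finset.univ).card = k₂.len + 1 := by
      rw [Finset.card_image_of_injective _ hi₂, Finset.card_univ, Fintype.card_fin]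
    have himg : Finset.image (⇑ι₁.toOrderHom) Finset.univ
        = Finset.image (⇑ι₂.toOrderHom) Finset.univ := by
      apply Finset.coe_injective
      simp only [Finset.coe_image, Finset.coe_univ, Set.image_univ, hr]
    rw [himg, c₂] at c₁
    omega
  have hι : ι₁ = ι₂ := by
    apply SimplexCategory.Hom.ext
    apply OrderHom.ext
    have m₁ : ∀ x, ι₁.toOrderHom x ∈ Finset.image (⇑ι₁.toOrderHom) Finset.univ :=
      fun x => Finset.mem_image_of_mem _ (Finset.mem_univ x)
    have m₂ : ∀ x, ι₂.toOrderHom x ∈ Finset.image (⇑ι₁.toOrderHom) Finset.univ := by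
      intro x
      rw [Finset.mem_image]
      have : ι₂.toOrderHom x ∈ Set.range ⇑ι₁.toOrderHom := hr ▸ Set.mem_range_self x
      obtain ⟨y, hy⟩ := this
      exact ⟨y, Finset.mem_univ y, hy⟩
    have hc : (Finset.image (⇑ι₁.toOrderHom) Finset.univ).card = k₁.len + 1 := by
      rw [Finset.card_image_of_injective _ hi₁, Finset.card_univ, Fintype.card_fin]
    rw [Finset.orderEmbOfFin_unique hc m₁
        (ι₁.toOrderHom.monotone.strictMono_of_injective hi₁),
      Finset.orderEmbOfFin_unique hc m₂
        (ι₂.toOrderHom.monotone.strictMono_of_injective hi₂)]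
  subst hι
  have hg : g₁ = g₂ := by
    funext a
    exact hi₁ (congr_fun h a)
  rw [hg]

end KB
namespace KB

open CategoryTheory CategoryTheory.Limits Simplicial Opposite Function

abbrev Pre (X : SSet) (m : SimplexCategory) : Type :=
  Σ p : SimplexCategory, X.obj (op p) × (Fin (m.len + 1) → Fin (p.len + 1))

def Rel (X : SSet) (m : SimplexCategory) : Pre X m → Pre X m → Prop :=
  fun a b => ∃ α : a.1 ⟶ b.1, a.2.1 = X.map α.op b.2.1 ∧ b.2.2 = ⇑α.toOrderHom ∘ a.2.2

/-- The explicit left Kan extension: `(Kex X)_m` is the set of pairs `(x, u)` with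
`x` an `n`-simplex of `X` and `u : [m] → [n]` an arbitrary function, modulo the
evident relation. -/
def Kex (X : SSet) : SSet where
  obj m := Quot (Rel X m.unop)
  map {m m'} γ := TypeCat.ofHom (Quot.map (fun a => ⟨a.1, a.2.1, a.2.2 ∘ ⇑γ.unop.toOrderHom⟩)
    (by
      rintro ⟨p, x, u⟩ ⟨p', x', u'⟩ ⟨α, h1, h2⟩
      dsimp only at h1 h2 ⊢
      exact ⟨α, h1, by rw [h2]; rfl⟩))
  map_id m := by apply ConcreteCategory.hom_ext; intro q; induction q using Quot.ind; rfl
  map_comp γ γ' := by apply ConcreteCategory.hom_ext; intro q; induction q using Quot.ind; rfl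

def KexMap {X Y : SSet} (f : X ⟶ Y) : Kex X ⟶ Kex Y where
  app m := TypeCat.ofHom (Quot.map (fun a => ⟨a.1, f.app (op a.1) a.2.1, a.2.2⟩)
    (by
      rintro ⟨p, x, u⟩ ⟨p', x', u'⟩ ⟨α, h1, h2⟩
      dsimp only at h1 h2 ⊢
      refine ⟨α, ?_, h2⟩
      rw [h1]
      exact ConcreteCategory.congr_hom (f.naturality α.op) x'))
  naturality m m' γ := by apply ConcreteCategory.hom_ext; intro q; induction q using Quot.ind; rfl

def KexF : SSet ⥤ SSet where
  obj := Kex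
  map := KexMap
  map_id X := by
    apply NatTrans.ext; funext m; apply ConcreteCategory.hom_ext; intro q
    induction q using Quot.ind; rfl
  map_comp f g := by
    apply NatTrans.ext; funext m; apply ConcreteCategory.hom_ext; intro q
    induction q using Quot.ind; rfl

/-- The simplex of `B π (Δⁿ)` with prescribed vertices. -/
def mkCA {n : SimplexCategory} {m : SimplexCategoryᵒᵖ}
    (g : Fin (m.unop.len + 1) → Fin (n.len + 1)) : (Bpi.obj n).obj m where
  obj i := g i
  map _ := ⟨⟩
  map_id _ := rfl
  map_comp _ _ := rfl

def adjHomEquiv (X Z : SSet) : (Kex X ⟶ Z) ≃ (X ⟶ kSh Z) where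
  toFun F :=
    { app := fun p => TypeCat.ofHom fun x =>
        { app := fun m => TypeCat.ofHom fun u => F.app m (Quot.mk _ ⟨p.unop, x, fun i => u.obj i⟩)
          naturality := fun m m' γ => by
            apply ConcreteCategory.hom_ext; intro u
            exact ConcreteCategory.congr_hom (F.naturality γ) (Quot.mk _ ⟨p.unop, x, fun i => u.obj i⟩) }
      naturality := fun p p' h => by
        apply ConcreteCategory.hom_ext; intro x
        apply NatTrans.ext
        funext m; apply ConcreteCategory.hom_ext; intro u
        exact congrArg (fun y => F.app m y) (Quot.sound ⟨h.unop, rfl, rfl⟩) }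
  invFun φ :=
    { app := fun m => TypeCat.ofHom (Quot.lift (fun a => (φ.app (op a.1) a.2.1).app m (mkCA a.2.2))
        (by
          rintro ⟨p, x, u⟩ ⟨p', x', u'⟩ ⟨α, h1, h2⟩
          dsimp only at h1 h2 ⊢
          rw [h1, h2]
          have hnat : φ.app (op p) (X.map α.op x') = (kSh Z).map α.op (φ.app (op p') x') :=
            ConcreteCategory.congr_hom (φ.naturality α.op) x'
          rw [hnat]
          show (φ.app (op p') x').app m ((Bpi.map α).app m (mkCA u)) = _
          exact congrArg _ (chaoticCA_ext _ _ (fun i => rfl))))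
      naturality := fun m m' γ => by
        apply ConcreteCategory.hom_ext; intro q
        induction q using Quot.ind with | _ a =>
        obtain ⟨p, x, u⟩ := a
        show (φ.app (op p) x).app m' (mkCA (u ∘ ⇑γ.unop.toOrderHom))
          = Z.map γ ((φ.app (op p) x).app m (mkCA u))
        rw [show mkCA (u ∘ ⇑γ.unop.toOrderHom) = (Bpi.obj p).map γ (mkCA u) from
          chaoticCA_ext _ _ (fun i => rfl)]
        exact ConcreteCategory.congr_hom ((φ.app (op p) x).naturality γ) (mkCA u) }
  left_inv F := by
    apply NatTrans.ext; funext m; apply ConcreteCategory.hom_ext; intro q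
    induction q using Quot.ind; rfl
  right_inv φ := by
    apply NatTrans.ext; funext p; apply ConcreteCategory.hom_ext; intro x
    apply NatTrans.ext; funext m; apply ConcreteCategory.hom_ext; intro u
    show (φ.app p x).app m (mkCA (fun i => u.obj i)) = (φ.app p x).app m u
    exact congrArg _ (chaoticCA_ext _ _ (fun i => rfl))

def adj : KexF ⊣ kShF :=
  Adjunction.mkOfHomEquiv
    { homEquiv := adjHomEquiv
      homEquiv_naturality_left_symm := by
        intro X' X Z f g
        apply NatTrans.ext; funext m; apply ConcreteCategory.hom_ext; intro q
        induction q using Quot.ind; rfl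
      homEquiv_naturality_right := by
        intro X Z Z' F g
        apply NatTrans.ext; funext p; apply ConcreteCategory.hom_ext; intro x
        apply NatTrans.ext; funext m; apply ConcreteCategory.hom_ext; intro u
        rfl }

lemma kexPreservesColimits : Limits.PreservesColimits KexF :=
  adj.leftAdjoint_preservesColimits

end KB
namespace KB

open CategoryTheory CategoryTheory.Limits Simplicial Opposite Function

def ystd : (yoneda : SimplexCategory ⥤ SSet) ≅ SSet.stdSimplex where
  hom :=
    { app := fun n =>
        { app := fun m => TypeCat.ofHom fun f => ULift.up f
          naturality := fun m m' γ => rfl }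
      naturality := fun n n' h => rfl }
  inv :=
    { app := fun n =>
        { app := fun m => TypeCat.ofHom fun f => f.down
          naturality := fun m m' γ => rfl }
      naturality := fun n n' h => rfl }
  hom_inv_id := rfl
  inv_hom_id := rfl

def Ψ : Bpi ⟶ (yoneda : SimplexCategory ⥤ SSet) ⋙ KexF where
  app n :=
    { app := fun m => TypeCat.ofHom fun u => Quot.mk _ ⟨n, 𝟙 n, fun i => u.obj i⟩
      naturality := fun m m' γ => rfl }
  naturality n n' h := by
    apply NatTrans.ext; funext m; apply ConcreteCategory.hom_ext; intro u
    exact (Quot.sound ⟨h, by simp, rfl⟩).symm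

def Φ : ((yoneda : SimplexCategory ⥤ SSet) ⋙ KexF) ⟶ Bpi where
  app n :=
    { app := fun m => TypeCat.ofHom (Quot.lift
        (fun a => mkCA (⇑(a.2.1 : a.1 ⟶ n).toOrderHom ∘ a.2.2))
        (by
          rintro ⟨p, x, u⟩ ⟨p', x', u'⟩ ⟨α, h1, h2⟩
          dsimp only at h1 h2 ⊢
          apply chaoticCA_ext
          intro i
          rw [h1, h2]
          rfl))
      naturality := fun m m' γ => by
        apply ConcreteCategory.hom_ext; intro q
        induction q using Quot.ind with | _ a =>
        obtain ⟨p, x, u⟩ := a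
        exact chaoticCA_ext _ _ (fun i => rfl) }
  naturality n n' h := by
    apply NatTrans.ext; funext m; apply ConcreteCategory.hom_ext; intro q
    induction q using Quot.ind with | _ a =>
    obtain ⟨p, x, u⟩ := a
    exact chaoticCA_ext _ _ (fun i => rfl)

def e₂ : Bpi ≅ (yoneda : SimplexCategory ⥤ SSet) ⋙ KexF where
  hom := Ψ
  inv := Φ
  hom_inv_id := by
    apply NatTrans.ext; funext n
    apply NatTrans.ext; funext m; apply ConcreteCategory.hom_ext; intro u
    exact chaoticCA_ext _ _ (fun i => rfl)
  inv_hom_id := by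
    apply NatTrans.ext; funext n
    apply NatTrans.ext; funext m; apply ConcreteCategory.hom_ext; intro q
    induction q using Quot.ind with | _ a =>
    obtain ⟨p, x, u⟩ := a
    exact (Quot.sound ⟨x, (Category.comp_id x).symm, rfl⟩).symm

noncomputable def kIsoKex (k : SSet ⥤ SSet) (hk : Limits.PreservesColimits k)
    (e : SSet.stdSimplex ⋙ k ≅ Bpi) : k ≅ KexF := by
  haveI := hk
  haveI := kexPreservesColimits
  exact (Presheaf.uniqueExtensionAlongULiftYoneda k (Functor.isoWhiskerRight uliftYonedaIsoYoneda k ≪≫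
    Functor.isoWhiskerRight ystd k ≪≫ e).symm) ≪≫
    (Presheaf.uniqueExtensionAlongULiftYoneda KexF
      (e₂ ≪≫ Functor.isoWhiskerRight uliftYonedaIsoYoneda.symm KexF)).symm

end KB
namespace KB

open CategoryTheory CategoryTheory.Limits Simplicial Opposite Function

noncomputable def ifct {m p : SimplexCategory} (u : Fin (m.len + 1) → Fin (p.len + 1)) :
    Σ k : SimplexCategory, (k ⟶ p) × (Fin (m.len + 1) → Fin (k.len + 1)) :=
  (img_fact u).choose

lemma ifct_spec {m p : SimplexCategory} (u : Fin (m.len + 1) → Fin (p.len + 1)) :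
    Function.Injective (ifct u).2.1.toOrderHom ∧ Function.Surjective (ifct u).2.2 ∧
      ⇑(ifct u).2.1.toOrderHom ∘ (ifct u).2.2 = u :=
  (img_fact u).choose_spec

lemma ifct_eq {m p : SimplexCategory} {u : Fin (m.len + 1) → Fin (p.len + 1)}
    (t : Σ k : SimplexCategory, (k ⟶ p) × (Fin (m.len + 1) → Fin (k.len + 1)))
    (hi : Function.Injective t.2.1.toOrderHom) (hs : Function.Surjective t.2.2)
    (hc : ⇑t.2.1.toOrderHom ∘ t.2.2 = u) : ifct u = t := by
  obtain ⟨h1, h2, h3⟩ := ifct_spec u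
  exact img_fact_unique h1 h2 hi hs (h3.trans hc.symm)

noncomputable def nfx (X : SSet) {p : SimplexCategory} (x : X.obj (op p)) :
    Σ q : SimplexCategory, (p ⟶ q) × X.obj (op q) :=
  (ez_exists X p x).choose

lemma nfx_spec (X : SSet) {p : SimplexCategory} (x : X.obj (op p)) :
    Function.Surjective (nfx X x).2.1.toOrderHom ∧ ¬ Degen X (nfx X x).2.2 ∧
      x = X.map (nfx X x).2.1.op (nfx X x).2.2 :=
  (ez_exists X p x).choose_spec

lemma nfx_eq (X : SSet) {p : SimplexCategory} {x : X.obj (op p)}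
    (t : Σ q : SimplexCategory, (p ⟶ q) × X.obj (op q))
    (hs : Function.Surjective t.2.1.toOrderHom) (hnd : ¬ Degen X t.2.2)
    (hx : x = X.map t.2.1.op t.2.2) : nfx X x = t := by
  obtain ⟨h1, h2, h3⟩ := nfx_spec X x
  obtain ⟨q, σ, z⟩ := t
  exact ez_unique _ _ h1 hs h2 hnd (h3.symm.trans hx)

/-- Normal form of a pair `(x, u)`: factor `u` through its image, then take the
Eilenberg–Zilber decomposition of the resulting simplex. -/
noncomputable def N (X : SSet) (m : SimplexCategory) (a : Pre X m) : Pre X m :=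
  ⟨(nfx X (X.map (ifct a.2.2).2.1.op a.2.1)).1,
   (nfx X (X.map (ifct a.2.2).2.1.op a.2.1)).2.2,
   ⇑(nfx X (X.map (ifct a.2.2).2.1.op a.2.1)).2.1.toOrderHom ∘ (ifct a.2.2).2.2⟩

lemma N_rel {X : SSet} {m : SimplexCategory} {a b : Pre X m} (h : Rel X m a b) :
    N X m a = N X m b := by
  obtain ⟨p, x, u⟩ := a
  obtain ⟨p', x', u'⟩ := b
  obtain ⟨α, h1, h2⟩ := h
  dsimp only at h1 h2 ⊢
  obtain ⟨hti, hts, htc⟩ := ifct_spec u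
  set t := ifct u with ht
  set θ : t.1 ⟶ p' := t.2.1 ≫ α with hθ
  have hfac : factorThruImage θ ≫ image.ι θ = θ := image.fac θ
  have hifct' : ifct u' =
      ⟨image θ, image.ι θ, ⇑(factorThruImage θ).toOrderHom ∘ t.2.2⟩ := by
    apply ifct_eq
    · show Function.Injective (image.ι θ).toOrderHom
      rw [← SimplexCategory.mono_iff_injective]; infer_instance
    · show Function.Surjective (⇑(factorThruImage θ).toOrderHom ∘ t.2.2)
      refine Function.Surjective.comp ?_ hts
      rw [← SimplexCategory.epi_iff_surjective]; infer_instance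
    · show ⇑(image.ι θ).toOrderHom ∘ (⇑(factorThruImage θ).toOrderHom ∘ t.2.2) = u'
      funext i
      have e1 : u' i = α.toOrderHom (u i) := congr_fun h2 i
      have e2 : u i = t.2.1.toOrderHom (t.2.2 i) := (congr_fun htc i).symm
      show (image.ι θ).toOrderHom ((factorThruImage θ).toOrderHom (t.2.2 i)) = u' i
      rw [e1, e2]
      exact congrArg (fun φ : t.1 ⟶ p' => φ.toOrderHom (t.2.2 i)) hfac
  set s := nfx X (X.map (image.ι θ).op x') with hsdef
  obtain ⟨hss, hsnd, hseq⟩ := nfx_spec X (X.map (image.ι θ).op x')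
  rw [← hsdef] at hseq
  have hstep3 : X.map t.2.1.op x = X.map (factorThruImage θ ≫ s.2.1).op s.2.2 := by
    calc X.map t.2.1.op x = X.map t.2.1.op (X.map α.op x') := by rw [h1]
    _ = X.map θ.op x' := by
        rw [← FunctorToTypes.map_comp_apply, ← op_comp, ← hθ]
    _ = X.map (factorThruImage θ ≫ image.ι θ).op x' :=
        (congrArg (fun φ : t.1 ⟶ p' => X.map φ.op x') hfac).symm
    _ = X.map (factorThruImage θ).op (X.map (image.ι θ).op x') := by
        rw [op_comp, FunctorToTypes.map_comp_apply]
    _ = X.map (factorThruImage θ).op (X.map s.2.1.op s.2.2) := by rw [hseq]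
    _ = X.map (factorThruImage θ ≫ s.2.1).op s.2.2 := by
        rw [op_comp, FunctorToTypes.map_comp_apply]
  have hnfx : nfx X (X.map t.2.1.op x) = ⟨s.1, factorThruImage θ ≫ s.2.1, s.2.2⟩ := by
    apply nfx_eq
    · show Function.Surjective (factorThruImage θ ≫ s.2.1).toOrderHom
      rw [coe_comp_toOrderHom]
      refine Function.Surjective.comp hss ?_
      rw [← SimplexCategory.epi_iff_surjective]; infer_instance
    · exact hsnd
    · exact hstep3
  show (⟨(nfx X (X.map t.2.1.op x)).1, (nfx X (X.map t.2.1.op x)).2.2,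
      ⇑(nfx X (X.map t.2.1.op x)).2.1.toOrderHom ∘ t.2.2⟩ : Pre X m)
    = ⟨(nfx X (X.map (ifct u').2.1.op x')).1, (nfx X (X.map (ifct u').2.1.op x')).2.2,
      ⇑(nfx X (X.map (ifct u').2.1.op x')).2.1.toOrderHom ∘ (ifct u').2.2⟩
  rw [hifct', hnfx]
  rfl

lemma N_mk {X : SSet} {m : SimplexCategory} (a : Pre X m) :
    Quot.mk (Rel X m) (N X m a) = Quot.mk (Rel X m) a := by
  obtain ⟨p, x, u⟩ := a
  obtain ⟨hti, hts, htc⟩ := ifct_spec u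
  set t := ifct u with ht
  set s := nfx X (X.map t.2.1.op x) with hsdef
  obtain ⟨hss, hsnd, hseq⟩ := nfx_spec X (X.map t.2.1.op x)
  rw [← hsdef] at hseq
  have step1 : Quot.mk (Rel X m) ⟨t.1, X.map t.2.1.op x, t.2.2⟩
      = Quot.mk (Rel X m) ⟨p, x, u⟩ :=
    Quot.sound ⟨t.2.1, rfl, htc.symm⟩
  have step2 : Quot.mk (Rel X m) ⟨t.1, X.map t.2.1.op x, t.2.2⟩
      = Quot.mk (Rel X m) ⟨s.1, s.2.2, ⇑s.2.1.toOrderHom ∘ t.2.2⟩ :=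
    Quot.sound ⟨s.2.1, hseq, rfl⟩
  show Quot.mk (Rel X m) ⟨s.1, s.2.2, ⇑s.2.1.toOrderHom ∘ t.2.2⟩ = _
  rw [← step2, step1]

/-- Injective simplicial maps preserve nondegeneracy. -/
lemma nondeg_map {X Y : SSet} {f : X ⟶ Y}
    (hf : ∀ q : SimplexCategoryᵒᵖ, Function.Injective (f.app q))
    {p : SimplexCategory} {z : X.obj (op p)} (hz : ¬ Degen X z) :
    ¬ Degen Y (f.app (op p) z) := by
  rintro ⟨q, α, w, hs, hlt, heq⟩
  apply hz
  obtain ⟨β, hβ, -⟩ := exists_section (SimplexCategory.Hom.mk α.toOrderHom) hs 0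
  refine ⟨q, α, X.map β.op z, hs, hlt, ?_⟩
  apply hf (op p)
  have hba : β ≫ α = 𝟙 q := hβ
  have hretr : Y.map β.op (Y.map α.op w) = w := by
    rw [← FunctorToTypes.map_comp_apply, ← op_comp, hba]
    simp
  calc f.app (op p) z = Y.map α.op w := heq
  _ = Y.map α.op (Y.map β.op (Y.map α.op w)) := by rw [hretr]
  _ = Y.map α.op (Y.map β.op (f.app (op p) z)) := by rw [← heq]
  _ = f.app (op p) (X.map α.op (X.map β.op z)) := by
      rw [FunctorToTypes.naturality, FunctorToTypes.naturality]

def PreMap {X Y : SSet} (f : X ⟶ Y) {m : SimplexCategory} (a : Pre X m) : Pre Y m :=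
  ⟨a.1, f.app (op a.1) a.2.1, a.2.2⟩

lemma N_map {X Y : SSet} (f : X ⟶ Y)
    (hf : ∀ q : SimplexCategoryᵒᵖ, Function.Injective (f.app q))
    {m : SimplexCategory} (a : Pre X m) :
    N Y m (PreMap f a) = PreMap f (N X m a) := by
  obtain ⟨p, x, u⟩ := a
  set t := ifct u with ht
  set s := nfx X (X.map t.2.1.op x) with hsdef
  obtain ⟨hss, hsnd, hseq⟩ := nfx_spec X (X.map t.2.1.op x)
  rw [← hsdef] at hseq
  have hY : Y.map t.2.1.op (f.app (op p) x) = Y.map s.2.1.op (f.app (op s.1) s.2.2) := by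
    rw [← FunctorToTypes.naturality, hseq, FunctorToTypes.naturality]
  have hnfxY : nfx Y (Y.map t.2.1.op (f.app (op p) x))
      = ⟨s.1, s.2.1, f.app (op s.1) s.2.2⟩ := by
    apply nfx_eq
    · exact hss
    · exact nondeg_map hf hsnd
    · exact hY
  show (⟨(nfx Y (Y.map t.2.1.op (f.app (op p) x))).1,
      (nfx Y (Y.map t.2.1.op (f.app (op p) x))).2.2,
      ⇑(nfx Y (Y.map t.2.1.op (f.app (op p) x))).2.1.toOrderHom ∘ t.2.2⟩ : Pre Y m)
    = ⟨s.1, f.app (op s.1) s.2.2, ⇑s.2.1.toOrderHom ∘ t.2.2⟩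
  rw [hnfxY]

lemma preMap_inj {X Y : SSet} (f : X ⟶ Y)
    (hf : ∀ q : SimplexCategoryᵒᵖ, Function.Injective (f.app q))
    {m : SimplexCategory} {A B : Pre X m} (h : PreMap f A = PreMap f B) : A = B := by
  obtain ⟨p, x, u⟩ := A
  obtain ⟨p', x', u'⟩ := B
  have hp : p = p' := congrArg Sigma.fst h
  subst hp
  have h2 : (f.app (op p) x, u) = (f.app (op p) x', u') := by
    have h3 := (Sigma.ext_iff.mp h).2
    exact eq_of_heq h3
  have hx : x = x' := hf (op p) (congrArg Prod.fst h2)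
  have hu : u = u' := congrArg Prod.snd h2
  rw [hx, hu]

lemma kex_inj {X Y : SSet} (f : X ⟶ Y)
    (hf : ∀ q : SimplexCategoryᵒᵖ, Function.Injective (f.app q))
    (m : SimplexCategoryᵒᵖ) : Function.Injective ((KexF.map f).app m) := by
  intro qa qb h
  induction qa using Quot.ind with | _ a =>
  induction qb using Quot.ind with | _ b =>
  have hN : N Y m.unop (PreMap f a) = N Y m.unop (PreMap f b) :=
    congrArg (Quot.lift (N Y m.unop) (fun _ _ hr => N_rel hr)) h
  rw [N_map f hf, N_map f hf] at hN
  have hNX : N X m.unop a = N X m.unop b := preMap_inj f hf hN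
  rw [← N_mk a, ← N_mk b, hNX]

end KB
namespace KB

open CategoryTheory CategoryTheory.Limits Simplicial Opposite Function

/-- The universe-0 case of the main theorem. -/
lemma mono0 (k : SSet.{0} ⥤ SSet.{0}) (hk : Limits.PreservesColimits k)
    (e : SSet.stdSimplex ⋙ k ≅ Bpi) {X Y : SSet.{0}} (f : X ⟶ Y) (hf : Mono f) :
    Mono (k.map f) := by
  haveI := hk
  haveI : Mono f := hf
  have hlevel : ∀ q : SimplexCategoryᵒᵖ, Function.Injective (f.app q) := by
    intro q
    rw [← CategoryTheory.mono_iff_injective]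
    infer_instance
  haveI hKex : Mono (KexF.map f) := by
    rw [NatTrans.mono_iff_mono_app]
    intro q
    rw [CategoryTheory.mono_iff_injective]
    exact kex_inj f hlevel q
  let i := kIsoKex k hk e
  have hfac : k.map f = i.hom.app X ≫ KexF.map f ≫ i.inv.app Y := by
    rw [← Category.assoc, ← i.hom.naturality f]
    simp
  rw [hfac]
  exact mono_comp _ _

universe w

/-- The discrete simplicial set on a type. -/
def disc (S : Type w) : SSet.{w} where
  obj _ := S
  map _ := 𝟙 _
  map_id _ := rfl
  map_comp _ _ := rfl

abbrev Dzero : SSet.{w} := SSet.stdSimplex.{w}.obj (SimplexCategory.mk 0)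

def pt0 (m : SimplexCategoryᵒᵖ) : (Dzero.{w}).obj m :=
  SSet.stdSimplex.objMk (OrderHom.const _ 0)

instance subsingDzero (m : SimplexCategoryᵒᵖ) : Subsingleton ((Dzero.{w}).obj m) := by
  constructor
  intro a b
  apply SSet.stdSimplex.objEquiv.injective
  ext i
  exact congr_arg Fin.val (Subsingleton.elim (α := Fin 1) _ _)

def discPt {S : Type w} (s : S) : Dzero.{w} ⟶ disc S where
  app _ := TypeCat.ofHom fun _ => s
  naturality _ _ _ := rfl

def discCofan : BinaryCofan (Dzero.{w}) (Dzero.{w}) :=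
  BinaryCofan.mk (discPt (ULift.up.{w} true)) (discPt (ULift.up.{w} false))

def discDesc {T : SSet.{w}} (g₁ g₂ : Dzero.{w} ⟶ T) : disc (ULift.{w} Bool) ⟶ T where
  app m := TypeCat.ofHom fun b => if b.down then g₁.app m (pt0 m) else g₂.app m (pt0 m)
  naturality m m' γ := by
    apply ConcreteCategory.hom_ext; intro b
    show (if b.down then g₁.app m' (pt0 m') else g₂.app m' (pt0 m'))
      = T.map γ (if b.down then g₁.app m (pt0 m) else g₂.app m (pt0 m))
    cases hb : b.down
    · simp only [if_neg Bool.false_ne_true]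
      have hnat : g₂.app m' ((Dzero.{w}).map γ (pt0 m)) = T.map γ (g₂.app m (pt0 m)) :=
        ConcreteCategory.congr_hom (g₂.naturality γ) (pt0 m)
      rw [← hnat]
      exact congrArg (fun y => g₂.app m' y) (Subsingleton.elim _ _)
    · simp only [if_pos]
      have hnat : g₁.app m' ((Dzero.{w}).map γ (pt0 m)) = T.map γ (g₁.app m (pt0 m)) :=
        ConcreteCategory.congr_hom (g₁.naturality γ) (pt0 m)
      rw [← hnat]
      exact congrArg (fun y => g₁.app m' y) (Subsingleton.elim _ _)

def discCofanColimit : IsColimit (discCofan.{w}) :=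
  BinaryCofan.IsColimit.mk _
    (fun g₁ g₂ => discDesc g₁ g₂)
    (fun g₁ g₂ => by
      apply NatTrans.ext; funext m; apply ConcreteCategory.hom_ext; intro x
      show (if (ULift.up.{w} true).down then g₁.app m (pt0 m) else g₂.app m (pt0 m))
        = g₁.app m x
      simp only [if_pos]
      exact congrArg (fun y => g₁.app m y) (Subsingleton.elim _ _))
    (fun g₁ g₂ => by
      apply NatTrans.ext; funext m; apply ConcreteCategory.hom_ext; intro x
      show (if (ULift.up.{w} false).down then g₁.app m (pt0 m) else g₂.app m (pt0 m))
        = g₂.app m x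
      simp only [if_neg Bool.false_ne_true]
      exact congrArg (fun y => g₂.app m y) (Subsingleton.elim _ _))
    (fun g₁ g₂ h h₁ h₂ => by
      apply NatTrans.ext; funext m; apply ConcreteCategory.hom_ext; intro b
      obtain ⟨b⟩ := b
      cases b
      · have h3 := ConcreteCategory.congr_hom (congr_arg (fun nt => NatTrans.app nt m) h₂) (pt0 m)
        exact h3
      · have h3 := ConcreteCategory.congr_hom (congr_arg (fun nt => NatTrans.app nt m) h₁) (pt0 m)
        exact h3)

lemma small_of_hyp (k : SSet.{w} ⥤ SSet.{0}) (hk : Limits.PreservesColimits k)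
    (e : SSet.stdSimplex.{w} ⋙ k ≅ Bpi) (S : Type w) : Small.{0} S := by
  haveI := hk
  classical
  let cB : Bool → ((Bpi.obj (SimplexCategory.mk 0)) ⟶ disc.{0} Bool) := fun b =>
    { app := fun m => TypeCat.ofHom fun _ => b
      naturality := fun _ _ _ => rfl }
  have cBne : cB true ≠ cB false := by
    intro hc
    have h0 := ConcreteCategory.congr_hom (congr_arg (fun nt => NatTrans.app nt (op (SimplexCategory.mk 0))) hc)
      (spineEl (SimplexCategory.mk 0))
    exact Bool.noConfusion h0
  refine small_of_injective (f := fun s : S => k.map (discPt s)) ?_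
  intro s s' hks0
  have hks : k.map (discPt s) = k.map (discPt s') := hks0
  by_contra hne
  let r : disc.{w} S ⟶ disc (ULift.{w} Bool) :=
    { app := fun m => TypeCat.ofHom fun x => if x = s then ULift.up true else ULift.up false
      naturality := fun _ _ _ => rfl }
  have hr1 : discPt s ≫ r = (discCofan.{w}).inl := by
    apply NatTrans.ext; funext m; apply ConcreteCategory.hom_ext; intro x
    show (if s = s then ULift.up.{w} true else ULift.up false) = ULift.up true
    simp
  have hr2 : discPt s' ≫ r = (discCofan.{w}).inr := by
    apply NatTrans.ext; funext m; apply ConcreteCategory.hom_ext; intro x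
    show (if s' = s then ULift.up.{w} true else ULift.up false) = ULift.up false
    rw [if_neg (fun h => hne h.symm)]
  have hkey : k.map (discCofan.{w}).inl = k.map (discCofan.{w}).inr := by
    exact ((congrArg k.map hr1).symm.trans (by rw [k.map_comp, k.map_comp, hks])).trans
      (congrArg k.map hr2)
  have hc : IsColimit (k.mapCocone (discCofan.{w})) := isColimitOfPreserves k discCofanColimit
  let g : Bool → (k.obj (Dzero.{w}) ⟶ disc.{0} Bool) := fun b =>
    (e.app (SimplexCategory.mk 0)).hom ≫ cB b
  let c2 : Cocone (pair (Dzero.{w}) (Dzero.{w}) ⋙ k) :=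
    { pt := disc.{0} Bool
      ι := Discrete.natTrans (fun j => match j with
        | ⟨WalkingPair.left⟩ => g true
        | ⟨WalkingPair.right⟩ => g false) }
  have h1 := hc.fac c2 ⟨WalkingPair.left⟩
  have h2 := hc.fac c2 ⟨WalkingPair.right⟩
  have h1' : k.map (discCofan.{w}).inl ≫ hc.desc c2 = g true := h1
  have h2' : k.map (discCofan.{w}).inr ≫ hc.desc c2 = g false := h2
  have hgg : g true = g false :=
    h1'.symm.trans ((congrArg (fun t => t ≫ hc.desc c2) hkey).trans h2')
  have hcB : cB true = cB false := by
    have h4 := congr_arg (fun t => (e.app (SimplexCategory.mk 0)).inv ≫ t) hgg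
    simpa [g] using h4
  exact cBne hcB

lemma mainU (k : SSet.{w} ⥤ SSet.{0}) (hk : Limits.PreservesColimits k)
    (e : SSet.stdSimplex.{w} ⋙ k ≅ Bpi) {X Y : SSet.{w}} (f : X ⟶ Y) (hf : Mono f) :
    Mono (k.map f) := by
  haveI := hk
  haveI : UnivLE.{w, 0} := ⟨fun α => small_of_hyp k hk e α⟩
  haveI : (CategoryTheory.uliftFunctor.{w, 0}).IsEquivalence := inferInstance
  let E : SSet.{0} ≌ SSet.{w} :=
    (CategoryTheory.uliftFunctor.{w, 0}.asEquivalence).congrRight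
  haveI : Limits.PreservesColimits E.functor := E.toAdjunction.leftAdjoint_preservesColimits
  let k' : SSet.{0} ⥤ SSet.{0} := E.functor ⋙ k
  haveI hpk' : Limits.PreservesColimits k' := Limits.comp_preservesColimits _ _
  let iso1 : SSet.stdSimplex.{0} ⋙ E.functor ≅ SSet.stdSimplex.{w} :=
    NatIso.ofComponents (fun n => NatIso.ofComponents (fun m =>
      { hom := TypeCat.ofHom fun x => ULift.up x.down.down
        inv := TypeCat.ofHom fun y => ULift.up (ULift.up y.down)
        hom_inv_id := rfl
        inv_hom_id := rfl }) (fun γ => rfl)) (fun h => rfl)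
  let e' : SSet.stdSimplex.{0} ⋙ k' ≅ Bpi :=
    (Functor.associator _ _ _).symm ≪≫ Functor.isoWhiskerRight iso1 k ≪≫ e
  haveI : Mono f := hf
  have hm0 : Mono (E.inverse.map f) := by
    haveI : E.inverse.PreservesMonomorphisms :=
      inferInstance
    infer_instance
  have hmono := mono0 k' hpk' e' (E.inverse.map f) hm0
  have hfac : f = (E.counitIso.app X).inv ≫ E.functor.map (E.inverse.map f)
      ≫ (E.counitIso.app Y).hom := by
    rw [Iso.eq_inv_comp]
    have h := E.counitIso.hom.naturality f
    simp only [Functor.comp_map, Functor.id_map] at h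
    exact h.symm
  rw [hfac, k.map_comp, k.map_comp]
  haveI : Mono (k.map (E.functor.map (E.inverse.map f))) := hmono
  haveI : Mono (k.map (E.counitIso.app X).inv) := by
    haveI : IsIso (k.map (E.counitIso.app X).inv) := inferInstance
    exact IsIso.mono_of_iso _
  haveI : Mono (k.map (E.counitIso.app Y).hom) := by
    haveI : IsIso (k.map (E.counitIso.app Y).hom) := inferInstance
    exact IsIso.mono_of_iso _
  exact mono_comp _ _

end KB

/-- The functor `k₁` (the colimit-preserving functor determined by
`k₁(Δⁿ) = Bπ(Δⁿ)`, i.e. the left Kan extension along `Δⁿ ↦ Bπ(Δⁿ)`)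
preserves monomorphisms of simplicial sets. -/
theorem kBang_preserves_mono (k : SSet ⥤ SSet) (hk : Limits.PreservesColimits k)
    (e : SSet.stdSimplex ⋙ k ≅ Bpi) :
    ∀ ⦃X Y : SSet⦄ (f : X ⟶ Y), Mono f → Mono (k.map f) := by
  intro X Y f hf
  exact KB.mainU k hk e f hf
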